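/- arXiv:2304.04102 — 2 statements merged into one kernel-verified Lean document; each statement's English description precedes it below -/
import Mathlib

section
/- For a complex number b such that b + j is not a nonpositive integer for every integer 0 ≤ j < n, the derivative of the reciprocal rising factorial with respect to b is d/db [1/(b)_n] = (ψ(b) - ψ(b+n))/(b)_n. -/
open Complex Finset

noncomputable def ψ (z : ℂ) : ℂ := deriv Complex.Gamma z / Complex.Gamma z

noncomputable def rf (x : ℂ) (n : ℕ) : ℂ := ∏ j ∈ Finset.range n, (x + j)

lemma psi_add_one (z : ℂ) (hz : ∀ m : ℕ, z ≠ -m) : ψ (z + 1) = ψ z + z⁻¹ := by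
  have hz0 : z ≠ 0 := by simpa using hz 0
  have hΓ : Complex.Gamma z ≠ 0 := Complex.Gamma_ne_zero hz
  have hz1 : ∀ m : ℕ, z + 1 ≠ -m := by
    intro m h
    have := hz (m + 1)
    apply this
    push_cast
    linear_combination h
  have hΓ1 : Complex.Gamma (z + 1) ≠ 0 := Complex.Gamma_ne_zero hz1
  have hd : HasDerivAt Complex.Gamma (deriv Complex.Gamma z) z :=
    (Complex.differentiableAt_Gamma z hz).hasDerivAt
  have hd1 : HasDerivAt Complex.Gamma (deriv Complex.Gamma (z + 1)) (z + 1) :=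
    (Complex.differentiableAt_Gamma (z + 1) hz1).hasDerivAt
  have h1 : HasDerivAt (fun w : ℂ => Complex.Gamma (w + 1))
      (deriv Complex.Gamma (z + 1) * 1) z :=
    hd1.comp z ((hasDerivAt_id z).add_const 1)
  have h2 : HasDerivAt (fun w : ℂ => w * Complex.Gamma w)
      (1 * Complex.Gamma z + z * deriv Complex.Gamma z) z :=
    (hasDerivAt_id z).mul hd
  have heq : (fun w : ℂ => Complex.Gamma (w + 1)) =ᶠ[nhds z]
      (fun w : ℂ => w * Complex.Gamma w) := by
    filter_upwards [isOpen_ne.mem_nhds hz0] with w hw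
    exact Complex.Gamma_add_one w hw
  have h2' : HasDerivAt (fun w : ℂ => Complex.Gamma (w + 1))
      (1 * Complex.Gamma z + z * deriv Complex.Gamma z) z :=
    h2.congr_of_eventuallyEq heq
  have key : deriv Complex.Gamma (z + 1) * 1
      = 1 * Complex.Gamma z + z * deriv Complex.Gamma z := h1.unique h2'
  have hG1 : Complex.Gamma (z + 1) = z * Complex.Gamma z := Complex.Gamma_add_one z hz0
  rw [ψ, ψ, hG1]
  rw [mul_one] at key
  rw [key]
  field_simp
  ring

lemma psi_sum (n : ℕ) (b : ℂ) (hb : ∀ j : ℕ, j < n → ∀ m : ℕ, b + j ≠ -m) :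
    ψ (b + n) = ψ b + ∑ j ∈ Finset.range n, (b + j)⁻¹ := by
  induction n with
  | zero => simp
  | succ n ih =>
    have h1 : ψ (b + n + 1) = ψ (b + n) + (b + n)⁻¹ :=
      psi_add_one (b + n) (hb n (Nat.lt_succ_self n))
    have h2 := ih (fun j hj => hb j (hj.trans (Nat.lt_succ_self n)))
    push_cast
    rw [← add_assoc, h1, h2, Finset.sum_range_succ]
    ring

lemma hasDerivAt_rf (n : ℕ) (b : ℂ) (hb : ∀ j : ℕ, j < n → b + j ≠ 0) :
    HasDerivAt (fun x : ℂ => rf x n)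
      (rf b n * ∑ j ∈ Finset.range n, (b + j)⁻¹) b := by
  induction n with
  | zero =>
    simp only [rf, Finset.range_zero, Finset.prod_empty, Finset.sum_empty, mul_zero]
    exact hasDerivAt_const b 1
  | succ n ih =>
    have hne : b + n ≠ 0 := hb n (Nat.lt_succ_self n)
    have h1 := ih (fun j hj => hb j (hj.trans (Nat.lt_succ_self n)))
    have h2 : HasDerivAt (fun x : ℂ => x + (n : ℂ)) 1 b := (hasDerivAt_id b).add_const (n : ℂ)
    have h3 : HasDerivAt (fun x : ℂ => rf x n * (x + n)) _ b := h1.mul h2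
    have hfun : (fun x : ℂ => rf x n * (x + n)) = fun x : ℂ => rf x (n + 1) := by
      funext x
      simp [rf, Finset.prod_range_succ]
    rw [hfun] at h3
    convert h3 using 1
    rw [Finset.sum_range_succ]
    have : rf b (n + 1) = rf b n * (b + n) := by simp [rf, Finset.prod_range_succ]
    rw [this]
    field_simp

theorem stmt3 (n : ℕ) (b : ℂ) (hb : ∀ j : ℕ, j < n → ∀ m : ℕ, b + j ≠ -m) :
    HasDerivAt (fun x : ℂ => (rf x n)⁻¹) ((ψ b - ψ (b + n)) / rf b n) b := by
  have hne0 : ∀ j : ℕ, j < n → b + j ≠ 0 := by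
    intro j hj
    simpa using hb j hj 0
  have hrf : rf b n ≠ 0 := by
    rw [rf]
    exact Finset.prod_ne_zero_iff.mpr fun j hj => hne0 j (Finset.mem_range.mp hj)
  have hd := (hasDerivAt_rf n b hne0).inv hrf
  refine hd.congr_deriv ?_
  rw [psi_sum n b hb]
  field_simp
  ring
end

section
/- Let m be a positive integer and c, d complex numbers that are not integers. Then ((1-d)_m / (1-c)_m) · Σ_{k=0}^{m-1} (-1)^{m-k} (m-k-1)! (c-m)_k / ((d-m)_k · k!) = ((1-d)/(1-c)) · Σ_{j=0}^{m-1} (-1)^{j+1} (2-d)_j · j! / ((2-c)_j · (m-1-j)!). -/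
open Complex Finset

lemma rf_ne_zero {x : ℂ} (hx : ∀ n : ℤ, x ≠ n) (n : ℕ) : rf x n ≠ 0 := by
  apply Finset.prod_ne_zero_iff.mpr
  intro j _ h
  exact hx (-(j : ℤ)) (by push_cast; linear_combination h)

lemma rf_add (x : ℂ) (a b : ℕ) : rf x (a + b) = rf x a * rf (x + a) b := by
  unfold rf
  rw [Finset.prod_range_add]
  congr 1
  apply Finset.prod_congr rfl
  intro i _
  push_cast
  ring

lemma rf_succ (x : ℂ) (b : ℕ) : rf x (b + 1) = x * rf (x + 1) b := by
  rw [add_comm b 1, rf_add]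
  simp [rf]

lemma rf_reflect (x : ℂ) (m k : ℕ) (hk : k ≤ m) :
    rf (x - m) k = (-1) ^ k * rf (1 - x + (m - k : ℕ)) k := by
  unfold rf
  rw [← Finset.prod_range_reflect (fun i => x - m + i) k]
  rw [show ((-1 : ℂ)) ^ k * ∏ j ∈ Finset.range k, (1 - x + (m - k : ℕ) + j)
      = ∏ j ∈ Finset.range k, (-1) * (1 - x + (m - k : ℕ) + j) by
    rw [Finset.prod_mul_distrib, Finset.prod_const, Finset.card_range]]
  apply Finset.prod_congr rfl
  intro i hi
  simp only [Finset.mem_range] at hi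
  have h1 : ((k - 1 - i : ℕ) : ℂ) = (k : ℂ) - 1 - i := by
    have : k - 1 - i = k - (1 + i) := by omega
    rw [this]
    push_cast [Nat.cast_sub (by omega : 1 + i ≤ k)]
    ring
  have h2 : ((m - k : ℕ) : ℂ) = (m : ℂ) - k := by
    push_cast [Nat.cast_sub hk]; ring
  rw [h1, h2]
  ring

lemma rf_key (x : ℂ) (m j : ℕ) (hj : j < m) :
    rf (1 - x) m = rf (1 - x) (j + 1) * ((-1) ^ (m - 1 - j) * rf (x - m) (m - 1 - j)) := by
  have h1 : m = (j + 1) + (m - 1 - j) := by omega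
  have h2 : m - (m - 1 - j) = j + 1 := by omega
  rw [rf_reflect x m (m - 1 - j) (by omega), h2]
  have hs : ((-1 : ℂ)) ^ (m - 1 - j) * (-1) ^ (m - 1 - j) = 1 := by
    rw [← pow_add, ← two_mul, pow_mul]; norm_num
  calc rf (1 - x) m = rf (1 - x) ((j + 1) + (m - 1 - j)) := by rw [← h1]
    _ = rf (1 - x) (j + 1) * rf (1 - x + (j + 1 : ℕ)) (m - 1 - j) := rf_add _ _ _
    _ = _ := by
        rw [← mul_assoc ((-1 : ℂ) ^ (m - 1 - j)), hs, one_mul]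

theorem stmt7 (m : ℕ) (hm : 1 ≤ m) (c d : ℂ)
    (hc : ∀ n : ℤ, c ≠ n) (hd : ∀ n : ℤ, d ≠ n) :
    (rf (1 - d) m / rf (1 - c) m) *
      ∑ k ∈ Finset.range m, (-1 : ℂ) ^ (m - k) * (Nat.factorial (m - k - 1) : ℂ) *
        rf (c - m) k / (rf (d - m) k * (Nat.factorial k : ℂ)) =
    ((1 - d) / (1 - c)) *
      ∑ j ∈ Finset.range m, (-1 : ℂ) ^ (j + 1) * rf (2 - d) j * (Nat.factorial j : ℂ) /
        (rf (2 - c) j * (Nat.factorial (m - 1 - j) : ℂ)) := by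
  have hcm : ∀ n : ℤ, c - (m : ℂ) ≠ n := fun n h => hc (n + m) (by push_cast; linear_combination h)
  have hdm : ∀ n : ℤ, d - (m : ℂ) ≠ n := fun n h => hd (n + m) (by push_cast; linear_combination h)
  have h1c : ∀ n : ℤ, (1 : ℂ) - c ≠ n := fun n h => hc (1 - n) (by push_cast; linear_combination -h)
  have h2c : ∀ n : ℤ, (2 : ℂ) - c ≠ n := fun n h => hc (2 - n) (by push_cast; linear_combination -h)
  rw [Finset.mul_sum, Finset.mul_sum,
    ← Finset.sum_range_reflect (fun k => rf (1 - d) m / rf (1 - c) m *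
      ((-1 : ℂ) ^ (m - k) * (Nat.factorial (m - k - 1) : ℂ) *
        rf (c - m) k / (rf (d - m) k * (Nat.factorial k : ℂ)))) m]
  apply Finset.sum_congr rfl
  intro j hj
  simp only [Finset.mem_range] at hj
  have e1 : m - (m - 1 - j) = j + 1 := by omega
  have e2 : m - (m - 1 - j) - 1 = j := by omega
  simp only [e1, e2, Nat.add_sub_cancel]
  rw [rf_key c m j hj, rf_key d m j hj, rf_succ, rf_succ]
  have hb : rf (2 - c) j ≠ 0 := rf_ne_zero h2c j
  have hp : rf (c - m) (m - 1 - j) ≠ 0 := rf_ne_zero hcm _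
  have hq : rf (d - m) (m - 1 - j) ≠ 0 := rf_ne_zero hdm _
  have h1 : (1 : ℂ) - c ≠ 0 := fun h => h1c 0 (by push_cast; linear_combination h)
  have hs : ((-1 : ℂ)) ^ (m - 1 - j) ≠ 0 := by simp
  have hf1 : ((m - 1 - j).factorial : ℂ) ≠ 0 := Nat.cast_ne_zero.mpr (Nat.factorial_ne_zero _)
  have hf2 : (j.factorial : ℂ) ≠ 0 := Nat.cast_ne_zero.mpr (Nat.factorial_ne_zero _)
  have e3 : (1 : ℂ) - c + 1 = 2 - c := by ring
  have e4 : (1 : ℂ) - d + 1 = 2 - d := by ring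
  rw [e3, e4]
  field_simp
end
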